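/- Let B be an n × n Hermitian complex matrix and let μ₁ ≤ μ₂ ≤ ⋯ ≤ μₙ be its eigenvalues listed in nondecreasing order with multiplicity. Let c₁ ≥ c₂ ≥ ⋯ ≥ cₙ be real numbers. Then ∑ⱼ₌₁ⁿ cⱼ·Re(B_{jj}) ≥ ∑ⱼ₌₁ⁿ cⱼ·μⱼ, where B_{jj} denotes the j-th diagonal entry of B (which is real since B is Hermitian). -/

import Mathlib

open Matrix

/-- Schur–Horn plus rearrangement: for a Hermitian matrix `B` with eigenvalues
`μ₁ ≤ ⋯ ≤ μₙ` and reals `c₁ ≥ ⋯ ≥ cₙ`, `∑ cⱼ·Re(B_{jj}) ≥ ∑ cⱼ·μⱼ`. -/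
theorem schur_horn_rearrangement
    {n : ℕ} (B : Matrix (Fin n) (Fin n) ℂ) (hB : B.IsHermitian)
    (μ : Fin n → ℝ) (hμmono : Monotone μ)
    (hμeig : ∃ σ : Equiv.Perm (Fin n), ∀ i, μ i = hB.eigenvalues (σ i))
    (c : Fin n → ℝ) (hc : Antitone c) :
    ∑ j, c j * μ j ≤ ∑ j, c j * (B j j).re := by
  obtain ⟨τ, hτ⟩ := hμeig
  set E : Fin n → ℝ := hB.eigenvalues with hE
  set U : Matrix (Fin n) (Fin n) ℂ := (hB.eigenvectorUnitary : Matrix (Fin n) (Fin n) ℂ)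
    with hU
  have hUmem : U ∈ Matrix.unitaryGroup (Fin n) ℂ := hB.eigenvectorUnitary.2
  -- rearrangement : for any permutation π, ∑ c j * μ j ≤ ∑ c j * E (π j)
  have hantivary : Antivary μ c := by
    intro i j hij
    rcases le_total i j with h | h
    · exact absurd (hc h) (not_le.mpr hij)
    · exact hμmono h
  have hrearr : ∀ π : Equiv.Perm (Fin n), ∑ j, c j * μ j ≤ ∑ j, c j * E (π j) := by
    intro π
    calc ∑ j, c j * μ j = ∑ j, μ j * c j := by simp [mul_comm]
      _ ≤ ∑ j, μ j * c ((τ.trans π.symm) j) :=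
          hantivary.sum_mul_le_sum_mul_comp_perm (σ := τ.trans π.symm)
      _ = ∑ j, c j * E (π j) := by
          refine Fintype.sum_equiv (τ.trans π.symm) _ _ fun j => ?_
          rw [Equiv.trans_apply, Equiv.apply_symm_apply, ← hτ, mul_comm]
  -- the doubly stochastic matrix of squared moduli of eigenvector entries
  set P : Matrix (Fin n) (Fin n) ℝ := fun j k => Complex.normSq (U j k) with hP
  have hPmem : P ∈ doublyStochastic ℝ (Fin n) := by
    rw [mem_doublyStochastic_iff_sum]
    refine ⟨fun i j => Complex.normSq_nonneg _, fun i => ?_, fun j => ?_⟩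
    · have h := Matrix.mem_unitaryGroup_iff.mp hUmem
      have h2 := congrArg (fun M => M i i) h
      simp only [Matrix.mul_apply, Matrix.one_apply_eq, Matrix.star_apply] at h2
      have heq : ∀ k, U i k * star (U i k) = (Complex.normSq (U i k) : ℂ) := fun k => by
        rw [Complex.star_def, Complex.mul_conj]
      rw [Finset.sum_congr rfl fun k _ => heq k] at h2
      have := congrArg Complex.re h2
      simpa using this
    · have h := Matrix.mem_unitaryGroup_iff'.mp hUmem
      have h2 := congrArg (fun M => M j j) h
      simp only [Matrix.mul_apply, Matrix.one_apply_eq, Matrix.star_apply] at h2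
      have heq : ∀ k, star (U k j) * U k j = (Complex.normSq (U k j) : ℂ) := fun k => by
        rw [Complex.star_def, mul_comm, Complex.mul_conj]
      rw [Finset.sum_congr rfl fun k _ => heq k] at h2
      have := congrArg Complex.re h2
      simpa using this
  -- diagonal entries
  have hdiag : ∀ j, (B j j).re = ∑ k, E k * P j k := by
    intro j
    have h2 := congrArg (fun M : Matrix (Fin n) (Fin n) ℂ => M j j) hB.spectral_theorem
    simp only [Unitary.conjStarAlgAut_apply, Matrix.mul_apply, Matrix.diagonal_apply, Function.comp_apply,
      Matrix.star_apply, mul_ite, mul_zero, Finset.sum_ite_eq', Finset.mem_univ,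
      if_true] at h2
    have h3 : B j j = ∑ k, ((E k : ℂ) * (Complex.normSq (U j k) : ℂ)) := by
      rw [h2]
      refine Finset.sum_congr rfl fun k _ => ?_
      rw [Complex.star_def, mul_right_comm, Complex.mul_conj, mul_comm]
      rfl
    have h4 : B j j = ((∑ k, E k * P j k : ℝ) : ℂ) := by
      rw [h3]; push_cast; rfl
    rw [h4, Complex.ofReal_re]
  -- rewrite RHS as a bilinear sum
  have hrhs : ∑ j, c j * (B j j).re = ∑ j, ∑ k, c j * E k * P j k := by
    refine Finset.sum_congr rfl fun j _ => ?_
    rw [hdiag j, Finset.mul_sum]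
    exact Finset.sum_congr rfl fun k _ => by ring
  rw [hrhs]
  -- Birkhoff decomposition
  obtain ⟨w, hw0, hw1, hwP⟩ := exists_eq_sum_perm_of_mem_doublyStochastic hPmem
  have hbil : ∑ j, ∑ k, c j * E k * P j k
      = ∑ σ : Equiv.Perm (Fin n), w σ * ∑ j, c j * E (σ j) := by
    have hPentry : ∀ j k, P j k = ∑ σ : Equiv.Perm (Fin n),
        w σ * (if σ j = k then (1:ℝ) else 0) := by
      intro j k
      have := congrArg (fun M : Matrix (Fin n) (Fin n) ℝ => M j k) hwP
      simp only [Finset.sum_apply, Matrix.sum_apply, Matrix.smul_apply, smul_eq_mul] at this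
      rw [← this]
      refine Finset.sum_congr rfl fun σ _ => ?_
      congr 1
      simp [Equiv.Perm.permMatrix, PEquiv.toMatrix_apply, Equiv.toPEquiv_apply, eq_comm]
    calc ∑ j, ∑ k, c j * E k * P j k
        = ∑ j, ∑ k, ∑ σ : Equiv.Perm (Fin n),
            w σ * (c j * E k * (if σ j = k then (1:ℝ) else 0)) := by
          refine Finset.sum_congr rfl fun j _ => Finset.sum_congr rfl fun k _ => ?_
          rw [hPentry, Finset.mul_sum]
          exact Finset.sum_congr rfl fun σ _ => by ring
      _ = ∑ j, ∑ σ : Equiv.Perm (Fin n), ∑ k,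
            w σ * (c j * E k * (if σ j = k then (1:ℝ) else 0)) :=
          Finset.sum_congr rfl fun j _ => Finset.sum_comm
      _ = ∑ σ : Equiv.Perm (Fin n), ∑ j, ∑ k,
            w σ * (c j * E k * (if σ j = k then (1:ℝ) else 0)) := Finset.sum_comm
      _ = ∑ σ : Equiv.Perm (Fin n), w σ * ∑ j, c j * E (σ j) := by
          refine Finset.sum_congr rfl fun σ _ => ?_
          rw [Finset.mul_sum]
          refine Finset.sum_congr rfl fun j _ => ?_
          rw [Finset.sum_eq_single (σ j) (fun l _ hl => by simp [Ne.symm hl]) (by simp)]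
          simp
  rw [hbil]
  calc ∑ j, c j * μ j = ∑ σ : Equiv.Perm (Fin n), w σ * ∑ j, c j * μ j := by
        rw [← Finset.sum_mul, hw1, one_mul]
    _ ≤ ∑ σ : Equiv.Perm (Fin n), w σ * ∑ j, c j * E (σ j) :=
        Finset.sum_le_sum fun σ _ =>
          mul_le_mul_of_nonneg_left (hrearr σ) (hw0 σ)
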